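/- Let J and I be finite sets, let N ≥ 1, let C_j ∈ ℕ for each j ∈ J, let D_i ⊆ J for each i ∈ I, and let θ : I × [N] → ℝ with θ(i,f) ≥ 0 for all i, f. Define the polytope P = { y : J × [N] → [0,1] : Σ_{f∈[N]} y(j,f) ≤ C_j for every j ∈ J } and the surrogate objective φ(y) = Σ_{i∈I} Σ_{f∈[N]} θ(i,f) (1 − Π_{j∈D_i}(1 − y(j,f))). Then for every y ∈ P there exists ŷ ∈ P taking values in {0,1} such that φ(ŷ) ≥ φ(y). -/

import Mathlib

private lemma phi_mono {J I : Type*} [Fintype I] [Fintype J] {N : ℕ}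
    (D : I → Finset J) (θ : I → Fin N → ℝ) (hθ : ∀ i f, 0 ≤ θ i f)
    (y y' : J → Fin N → ℝ) (h1 : ∀ j f, y' j f ≤ 1) (hle : ∀ j f, y j f ≤ y' j f) :
    (∑ i, ∑ f, θ i f * (1 - ∏ j ∈ D i, (1 - y j f))) ≤
      ∑ i, ∑ f, θ i f * (1 - ∏ j ∈ D i, (1 - y' j f)) := by
  refine Finset.sum_le_sum fun i _ => Finset.sum_le_sum fun f _ => ?_
  refine mul_le_mul_of_nonneg_left ?_ (hθ i f)
  have : ∏ j ∈ D i, (1 - y' j f) ≤ ∏ j ∈ D i, (1 - y j f) :=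
    Finset.prod_le_prod (fun j _ => by linarith [h1 j f]) (fun j _ => by linarith [hle j f])
  linarith

open Classical Finset in
private lemma pipage_aux {J I : Type*} [Fintype I] [Fintype J] (N : ℕ)
    (Ccap : J → ℕ) (D : I → Finset J) (θ : I → Fin N → ℝ)
    (hθ : ∀ i f, 0 ≤ θ i f) :
    ∀ n : ℕ, ∀ y : J → Fin N → ℝ, (∀ j f, 0 ≤ y j f) → (∀ j f, y j f ≤ 1) →
      (∀ j, ∑ f, y j f ≤ (Ccap j : ℝ)) →
      ((Finset.univ.filter (fun p : J × Fin N => y p.1 p.2 ≠ 0 ∧ y p.1 p.2 ≠ 1)).card ≤ n) →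
      ∃ yh : J → Fin N → ℝ,
        (∀ j f, yh j f = 0 ∨ yh j f = 1) ∧
        (∀ j f, 0 ≤ yh j f) ∧ (∀ j f, yh j f ≤ 1) ∧
        (∀ j, ∑ f, yh j f ≤ (Ccap j : ℝ)) ∧
        (∑ i, ∑ f, θ i f * (1 - ∏ j ∈ D i, (1 - y j f))) ≤
          ∑ i, ∑ f, θ i f * (1 - ∏ j ∈ D i, (1 - yh j f)) := by
  intro n
  induction n with
  | zero =>
    intro y hy0 hy1 hyC hcard
    refine ⟨y, ?_, hy0, hy1, hyC, le_rfl⟩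
    intro j f
    by_contra h
    push_neg at h
    have : (j, f) ∈ Finset.univ.filter
        (fun p : J × Fin N => y p.1 p.2 ≠ 0 ∧ y p.1 p.2 ≠ 1) := by
      simp [h.1, h.2]
    have := Finset.card_pos.mpr ⟨_, this⟩
    omega
  | succ n ih =>
    intro y hy0 hy1 hyC hcard
    by_cases hsmall :
        (Finset.univ.filter (fun p : J × Fin N => y p.1 p.2 ≠ 0 ∧ y p.1 p.2 ≠ 1)).card ≤ n
    · exact ih y hy0 hy1 hyC hsmall
    · -- there is a fractional coordinate (j, f0)
      have hne : (Finset.univ.filter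
          (fun p : J × Fin N => y p.1 p.2 ≠ 0 ∧ y p.1 p.2 ≠ 1)).Nonempty := by
        rw [Finset.nonempty_iff_ne_empty]
        intro h
        rw [h] at hsmall
        simp at hsmall
      obtain ⟨⟨j, f0⟩, hp⟩ := hne
      rw [Finset.mem_filter] at hp
      obtain ⟨-, ha0, ha1⟩ := hp
      have ha0' : 0 < y j f0 := lt_of_le_of_ne (hy0 j f0) (Ne.symm ha0)
      have ha1' : y j f0 < 1 := lt_of_le_of_ne (hy1 j f0) ha1
      by_cases hex : ∃ f1, f1 ≠ f0 ∧ y j f1 ≠ 0 ∧ y j f1 ≠ 1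
      · -- pipage step: two fractional slots f0 ≠ f1 in row j
        obtain ⟨f1, hf10, hb0, hb1⟩ := hex
        have hb0' : 0 < y j f1 := lt_of_le_of_ne (hy0 j f1) (Ne.symm hb0)
        have hb1' : y j f1 < 1 := lt_of_le_of_ne (hy1 j f1) hb1
        have hf01 : f0 ≠ f1 := Ne.symm hf10
        set a := y j f0 with hadef
        set b := y j f1 with hbdef
        set B : ℝ := ∑ i, ((if j ∈ D i then θ i f0 * ∏ j' ∈ (D i).erase j, (1 - y j' f0) else 0)
          - (if j ∈ D i then θ i f1 * ∏ j' ∈ (D i).erase j, (1 - y j' f1) else 0)) with hBdef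
        set t : ℝ := if 0 ≤ B then min (1 - a) b else -(min a (1 - b)) with htdef
        set Y : J → Fin N → ℝ := fun j' f =>
          if j' = j ∧ f = f0 then a + t else if j' = j ∧ f = f1 then b - t else y j' f with hYdef
        have hYf0 : Y j f0 = a + t := by simp [hYdef]
        have hYf1 : Y j f1 = b - t := by simp [hYdef, hf10]
        have hYo : ∀ j' f, ¬(j' = j ∧ f = f0) → ¬(j' = j ∧ f = f1) → Y j' f = y j' f := by
          intro j' f h1 h2; simp [hYdef, h1, h2]
        -- bounds on t-moved coordinates
        have hmin1 : (0:ℝ) ≤ min (1 - a) b := le_min (by linarith) (by linarith)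
        have hmin2 : (0:ℝ) ≤ min a (1 - b) := le_min (by linarith) (by linarith)
        have htb : 0 ≤ a + t ∧ a + t ≤ 1 ∧ 0 ≤ b - t ∧ b - t ≤ 1 := by
          rw [htdef]
          split_ifs with hB
          · have h1 := min_le_left (1 - a) b
            have h2 := min_le_right (1 - a) b
            refine ⟨by linarith, by linarith, by linarith, by linarith⟩
          · have h1 := min_le_left a (1 - b)
            have h2 := min_le_right a (1 - b)
            refine ⟨by linarith, by linarith, by linarith, by linarith⟩
        -- affinity of φ along the move
        have hkey : (∑ i, ∑ f, θ i f * (1 - ∏ j' ∈ D i, (1 - Y j' f))) =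
            (∑ i, ∑ f, θ i f * (1 - ∏ j' ∈ D i, (1 - y j' f))) + t * B := by
          rw [hBdef, Finset.mul_sum, ← Finset.sum_add_distrib]
          refine Finset.sum_congr rfl fun i _ => ?_
          have hterm : ∀ f, θ i f * (1 - ∏ j' ∈ D i, (1 - Y j' f)) =
              θ i f * (1 - ∏ j' ∈ D i, (1 - y j' f)) +
              ((if f = f0 then
                  t * (if j ∈ D i then θ i f0 * ∏ j' ∈ (D i).erase j, (1 - y j' f0) else 0)
                else 0) +
               (if f = f1 then
                  -(t * (if j ∈ D i then θ i f1 * ∏ j' ∈ (D i).erase j, (1 - y j' f1) else 0))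
                else 0)) := by
            intro f
            by_cases hf : f = f0
            · subst hf
              rw [if_pos rfl, if_neg hf01]
              by_cases hjD : j ∈ D i
              · rw [if_pos hjD]
                have hpY : ∏ j' ∈ D i, (1 - Y j' f) =
                    (1 - (a + t)) * ∏ j' ∈ (D i).erase j, (1 - y j' f) := by
                  rw [← Finset.mul_prod_erase (D i) _ hjD, hYf0]
                  congr 1
                  refine Finset.prod_congr rfl fun j' hj' => ?_
                  have hne : j' ≠ j := Finset.ne_of_mem_erase hj'
                  rw [hYo j' f (fun h => hne h.1) (fun h => hne h.1)]
                have hpy : ∏ j' ∈ D i, (1 - y j' f) =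
                    (1 - a) * ∏ j' ∈ (D i).erase j, (1 - y j' f) := by
                  rw [← Finset.mul_prod_erase (D i) _ hjD]
                rw [hpY, hpy]; ring
              · rw [if_neg hjD]
                have : ∏ j' ∈ D i, (1 - Y j' f) = ∏ j' ∈ D i, (1 - y j' f) := by
                  refine Finset.prod_congr rfl fun j' hj' => ?_
                  have hne : j' ≠ j := fun h => hjD (h ▸ hj')
                  rw [hYo j' f (fun h => hne h.1) (fun h => hne h.1)]
                rw [this]; ring
            · rw [if_neg hf]
              by_cases hf1 : f = f1
              · subst hf1
                rw [if_pos rfl]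
                by_cases hjD : j ∈ D i
                · rw [if_pos hjD]
                  have hpY : ∏ j' ∈ D i, (1 - Y j' f) =
                      (1 - (b - t)) * ∏ j' ∈ (D i).erase j, (1 - y j' f) := by
                    rw [← Finset.mul_prod_erase (D i) _ hjD, hYf1]
                    congr 1
                    refine Finset.prod_congr rfl fun j' hj' => ?_
                    have hne : j' ≠ j := Finset.ne_of_mem_erase hj'
                    rw [hYo j' f (fun h => hne h.1) (fun h => hne h.1)]
                  have hpy : ∏ j' ∈ D i, (1 - y j' f) =
                      (1 - b) * ∏ j' ∈ (D i).erase j, (1 - y j' f) := by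
                    rw [← Finset.mul_prod_erase (D i) _ hjD]
                  rw [hpY, hpy]; ring
                · rw [if_neg hjD]
                  have : ∏ j' ∈ D i, (1 - Y j' f) = ∏ j' ∈ D i, (1 - y j' f) := by
                    refine Finset.prod_congr rfl fun j' hj' => ?_
                    have hne : j' ≠ j := fun h => hjD (h ▸ hj')
                    rw [hYo j' f (fun h => hne h.1) (fun h => hne h.1)]
                  rw [this]; ring
              · rw [if_neg hf1]
                have : ∏ j' ∈ D i, (1 - Y j' f) = ∏ j' ∈ D i, (1 - y j' f) := by
                  refine Finset.prod_congr rfl fun j' hj' => ?_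
                  rw [hYo j' f (fun h => hf h.2) (fun h => hf1 h.2)]
                rw [this]; ring
          rw [Finset.sum_congr rfl fun f _ => hterm f]
          rw [Finset.sum_add_distrib, Finset.sum_add_distrib]
          rw [Finset.sum_ite_eq' Finset.univ f0, Finset.sum_ite_eq' Finset.univ f1]
          simp only [Finset.mem_univ, if_pos]
          ring
        have hBt : 0 ≤ t * B := by
          rw [htdef]
          by_cases hB : 0 ≤ B
          · rw [if_pos hB]; exact mul_nonneg hmin1 hB
          · rw [if_neg hB]; push_neg at hB
            nlinarith [hmin2]
        have hφle : (∑ i, ∑ f, θ i f * (1 - ∏ j' ∈ D i, (1 - y j' f))) ≤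
            ∑ i, ∑ f, θ i f * (1 - ∏ j' ∈ D i, (1 - Y j' f)) := by
          rw [hkey]; linarith
        -- the move keeps the polytope constraints
        have hY0 : ∀ j' f, 0 ≤ Y j' f := by
          intro j' f
          by_cases h1 : j' = j ∧ f = f0
          · rw [h1.1, h1.2, hYf0]; exact htb.1
          · by_cases h2 : j' = j ∧ f = f1
            · rw [h2.1, h2.2, hYf1]; exact htb.2.2.1
            · rw [hYo j' f h1 h2]; exact hy0 j' f
        have hY1 : ∀ j' f, Y j' f ≤ 1 := by
          intro j' f
          by_cases h1 : j' = j ∧ f = f0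
          · rw [h1.1, h1.2, hYf0]; exact htb.2.1
          · by_cases h2 : j' = j ∧ f = f1
            · rw [h2.1, h2.2, hYf1]; exact htb.2.2.2
            · rw [hYo j' f h1 h2]; exact hy1 j' f
        have hYC : ∀ j', ∑ f, Y j' f ≤ (Ccap j' : ℝ) := by
          intro j'
          by_cases hj : j' = j
          · subst hj
            have heach : ∀ f, Y j' f = y j' f +
                ((if f = f0 then t else 0) + (if f = f1 then -t else 0)) := by
              intro f
              by_cases hf : f = f0
              · subst hf; rw [hYf0, if_pos rfl, if_neg hf01]; ring
              · by_cases hf1 : f = f1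
                · subst hf1; rw [hYf1, if_neg hf, if_pos rfl]; ring
                · rw [hYo _ _ (fun h => hf h.2) (fun h => hf1 h.2), if_neg hf, if_neg hf1]; ring
            rw [Finset.sum_congr rfl fun f _ => heach f, Finset.sum_add_distrib,
              Finset.sum_add_distrib, Finset.sum_ite_eq' Finset.univ f0,
              Finset.sum_ite_eq' Finset.univ f1]
            simp only [Finset.mem_univ, if_pos]
            have := hyC j'
            linarith
          · have : ∀ f, Y j' f = y j' f := fun f =>
              hYo _ _ (fun h => hj h.1) (fun h => hj h.1)
            simp only [this]; exact hyC j'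
        -- one endpoint coordinate becomes integral
        have hend : (Y j f0 = 0 ∨ Y j f0 = 1) ∨ (Y j f1 = 0 ∨ Y j f1 = 1) := by
          rw [hYf0, hYf1, htdef]
          by_cases hB : 0 ≤ B
          · rw [if_pos hB]
            rcases min_cases (1 - a) b with ⟨h, -⟩ | ⟨h, -⟩
            · left; right; rw [h]; ring
            · right; left; rw [h]; ring
          · rw [if_neg hB]
            rcases min_cases a (1 - b) with ⟨h, -⟩ | ⟨h, -⟩
            · left; left; rw [h]; ring
            · right; right; rw [h]; ring
        obtain ⟨p, hpmem, hpint⟩ :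
            ∃ p : J × Fin N, p ∈ (Finset.univ.filter
              (fun p : J × Fin N => y p.1 p.2 ≠ 0 ∧ y p.1 p.2 ≠ 1)) ∧
              (Y p.1 p.2 = 0 ∨ Y p.1 p.2 = 1) := by
          rcases hend with h | h
          · exact ⟨(j, f0), by simp [ha0, ha1]; exact ⟨ha0, ha1⟩, h⟩
          · exact ⟨(j, f1), by simp [hb0, hb1]; exact ⟨hb0, hb1⟩, h⟩
        have hsub : (Finset.univ.filter (fun p : J × Fin N => Y p.1 p.2 ≠ 0 ∧ Y p.1 p.2 ≠ 1)) ⊆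
            (Finset.univ.filter
              (fun p : J × Fin N => y p.1 p.2 ≠ 0 ∧ y p.1 p.2 ≠ 1)).erase p := by
          intro q hq
          rw [Finset.mem_filter] at hq
          obtain ⟨-, hq0, hq1⟩ := hq
          have hqne : q ≠ p := by
            intro h; subst h
            rcases hpint with h | h
            · exact hq0 h
            · exact hq1 h
          rw [Finset.mem_erase, Finset.mem_filter]
          refine ⟨hqne, Finset.mem_univ q, ?_⟩
          by_cases h1 : q.1 = j ∧ q.2 = f0
          · rw [h1.1, h1.2]; exact ⟨ha0, ha1⟩
          · by_cases h2 : q.1 = j ∧ q.2 = f1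
            · rw [h2.1, h2.2]; exact ⟨hb0, hb1⟩
            · rw [hYo q.1 q.2 h1 h2] at hq0 hq1; exact ⟨hq0, hq1⟩
        have hcard' : (Finset.univ.filter
            (fun p : J × Fin N => Y p.1 p.2 ≠ 0 ∧ Y p.1 p.2 ≠ 1)).card ≤ n := by
          calc _ ≤ ((Finset.univ.filter
                (fun p : J × Fin N => y p.1 p.2 ≠ 0 ∧ y p.1 p.2 ≠ 1)).erase p).card :=
              Finset.card_le_card hsub
            _ = (Finset.univ.filter
                (fun p : J × Fin N => y p.1 p.2 ≠ 0 ∧ y p.1 p.2 ≠ 1)).card - 1 :=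
              Finset.card_erase_of_mem hpmem
            _ ≤ n := by omega
        obtain ⟨yh, hI, hA, hB2, hCc, hφ⟩ := ih Y hY0 hY1 hYC hcard'
        exact ⟨yh, hI, hA, hB2, hCc, le_trans hφle hφ⟩
      · -- round-up step: f0 is the only fractional slot in row j
        push_neg at hex
        set y' : J → Fin N → ℝ := fun j' f => if j' = j ∧ f = f0 then 1 else y j' f with hy'
        have hy'eq : ∀ j' f, ¬(j' = j ∧ f = f0) → y' j' f = y j' f := by
          intro j' f h; simp [hy', h]
        have hy'f0 : y' j f0 = 1 := by simp [hy']
        have hle : ∀ j' f, y j' f ≤ y' j' f := by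
          intro j' f
          by_cases h : j' = j ∧ f = f0
          · rw [h.1, h.2] at *; rw [hy'f0]; exact hy1 j f0
          · rw [hy'eq _ _ h]
        have h0' : ∀ j' f, 0 ≤ y' j' f := fun j' f => le_trans (hy0 j' f) (hle j' f)
        have h1' : ∀ j' f, y' j' f ≤ 1 := by
          intro j' f
          by_cases h : j' = j ∧ f = f0
          · rw [h.1, h.2]; rw [hy'f0]
          · rw [hy'eq _ _ h]; exact hy1 j' f
        -- the sum over row j of y is (card of ones) + y j f0
        have hs : ∑ f ∈ Finset.univ.erase f0, y j f =
            (((Finset.univ.erase f0).filter (fun f => y j f = 1)).card : ℝ) := by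
          rw [← Finset.sum_boole]
          refine Finset.sum_congr rfl fun f hf => ?_
          have hf0 : f ≠ f0 := (Finset.mem_erase.mp hf).1
          by_cases h1 : y j f = 1
          · simp [h1]
          · have h0 : y j f = 0 := by
              by_contra h0
              exact h1 (hex f hf0 h0)
            simp [h0, h1]
        have hrow : y j f0 + ∑ f ∈ Finset.univ.erase f0, y j f ≤ (Ccap j : ℝ) := by
          rw [Finset.add_sum_erase _ _ (Finset.mem_univ f0)]
          exact hyC j
        have hcardlt : (((Finset.univ.erase f0).filter (fun f => y j f = 1)).card) < Ccap j := by
          have : (((Finset.univ.erase f0).filter (fun f => y j f = 1)).card : ℝ) < (Ccap j : ℝ) := by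
            rw [← hs]; linarith
          exact_mod_cast this
        have hC' : ∀ j', ∑ f, y' j' f ≤ (Ccap j' : ℝ) := by
          intro j'
          by_cases hj : j' = j
          · subst hj
            have : ∑ f, y' j' f = 1 + ∑ f ∈ Finset.univ.erase f0, y j' f := by
              rw [← Finset.add_sum_erase _ _ (Finset.mem_univ f0), hy'f0]
              congr 1
              refine Finset.sum_congr rfl fun f hf => ?_
              exact hy'eq _ _ (fun h => (Finset.mem_erase.mp hf).1 h.2)
            rw [this, hs]
            have : (((Finset.univ.erase f0).filter (fun f => y j' f = 1)).card : ℝ) + 1 ≤ (Ccap j' : ℝ) := by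
              exact_mod_cast Nat.succ_le_of_lt hcardlt
            linarith
          · have : ∀ f, y' j' f = y j' f := fun f => hy'eq _ _ (fun h => hj h.1)
            simp only [this]; exact hyC j'
        have hsub : (Finset.univ.filter (fun p : J × Fin N => y' p.1 p.2 ≠ 0 ∧ y' p.1 p.2 ≠ 1)) ⊆
            (Finset.univ.filter (fun p : J × Fin N => y p.1 p.2 ≠ 0 ∧ y p.1 p.2 ≠ 1)).erase (j, f0) := by
          intro q hq
          rw [Finset.mem_filter] at hq
          obtain ⟨-, hq0, hq1⟩ := hq
          have hqne : q ≠ (j, f0) := by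
            intro h; subst h; exact hq1 hy'f0
          have : ¬(q.1 = j ∧ q.2 = f0) := by
            intro h; exact hqne (Prod.ext h.1 h.2)
          rw [Finset.mem_erase, Finset.mem_filter]
          rw [hy'eq _ _ this] at hq0 hq1
          exact ⟨hqne, Finset.mem_univ q, hq0, hq1⟩
        have hmem : (j, f0) ∈ (Finset.univ.filter
            (fun p : J × Fin N => y p.1 p.2 ≠ 0 ∧ y p.1 p.2 ≠ 1)) := by
          simp [ha0, ha1]
        have hcard' : (Finset.univ.filter
            (fun p : J × Fin N => y' p.1 p.2 ≠ 0 ∧ y' p.1 p.2 ≠ 1)).card ≤ n := by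
          calc _ ≤ ((Finset.univ.filter
                (fun p : J × Fin N => y p.1 p.2 ≠ 0 ∧ y p.1 p.2 ≠ 1)).erase (j, f0)).card :=
              Finset.card_le_card hsub
            _ = (Finset.univ.filter
                (fun p : J × Fin N => y p.1 p.2 ≠ 0 ∧ y p.1 p.2 ≠ 1)).card - 1 :=
              Finset.card_erase_of_mem hmem
            _ ≤ n := by omega
        obtain ⟨yh, hI, hA, hB, hCc, hφ⟩ := ih y' h0' h1' hC' hcard'
        exact ⟨yh, hI, hA, hB, hCc, le_trans (phi_mono D θ hθ y y' h1' hle) hφ⟩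



/-- Correctness of Pipage rounding: any fractional point of the cache-capacity polytope can be
rounded to a `{0,1}`-valued point of the polytope without decreasing the multilinear surrogate
objective `φ`. -/
theorem stmt9 {J I : Type*} [Fintype I] [Fintype J] (N : ℕ) (hN : 1 ≤ N)
    (Ccap : J → ℕ) (D : I → Finset J) (θ : I → Fin N → ℝ)
    (hθ : ∀ i f, 0 ≤ θ i f)
    (y : J → Fin N → ℝ) (hy0 : ∀ j f, 0 ≤ y j f) (hy1 : ∀ j f, y j f ≤ 1)
    (hyC : ∀ j, ∑ f, y j f ≤ (Ccap j : ℝ)) :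
    ∃ yh : J → Fin N → ℝ,
      (∀ j f, yh j f = 0 ∨ yh j f = 1) ∧
      (∀ j f, 0 ≤ yh j f) ∧ (∀ j f, yh j f ≤ 1) ∧
      (∀ j, ∑ f, yh j f ≤ (Ccap j : ℝ)) ∧
      (∑ i, ∑ f, θ i f * (1 - ∏ j ∈ D i, (1 - y j f))) ≤
        ∑ i, ∑ f, θ i f * (1 - ∏ j ∈ D i, (1 - yh j f)) := by
  classical
  exact pipage_aux N Ccap D θ hθ _ y hy0 hy1 hyC le_rfl
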